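/- Let G be a simple graph containing no cycle of length 5 as a subgraph, and let v be any vertex of G. Then the number of edges of G having both endpoints in the neighborhood N_G(v) is at most deg_G(v). -/

import Mathlib

/-- A graph is `C5`-free if it contains no cycle of length 5 as a subgraph. -/
def C5Free {V : Type*} (G : SimpleGraph V) : Prop :=
  ¬ ∃ v : Fin 5 → V, Function.Injective v ∧ ∀ i : Fin 5, G.Adj (v i) (v (i + 1))

section Aux

variable {V : Type*} [Fintype V] [DecidableEq V] (G : SimpleGraph V) [DecidableRel G.Adj]

/-- edges of G with both endpoints in S -/
def ES (S : Finset V) : Finset (Sym2 V) :=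
  G.edgeFinset.filter fun e => ∀ x ∈ e, x ∈ S

lemma ES_erase (S : Finset V) (u : V) (hu : u ∈ S) :
    (ES G S).card = (ES G (S.erase u)).card + (S.filter (G.Adj u)).card := by
  classical
  have h1 : ES G (S.erase u) = (ES G S).filter (fun e => ¬ u ∈ e) := by
    ext e
    induction e using Sym2.ind with
    | _ x y =>
      simp only [ES, Finset.mem_filter, Sym2.mem_iff, Finset.mem_erase]
      constructor
      · rintro ⟨he, h⟩
        refine ⟨⟨he, fun z hz => ((h z hz).2)⟩, ?_⟩
        rintro (rfl | rfl)
        · exact (h u (Or.inl rfl)).1 rfl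
        · exact (h u (Or.inr rfl)).1 rfl
      · rintro ⟨⟨he, h⟩, hne⟩
        refine ⟨he, fun z hz => ⟨fun hzu => hne ?_, h z hz⟩⟩
        · subst hzu; exact hz
  have h2 : (ES G S).filter (fun e => u ∈ e) = (S.filter (G.Adj u)).image (fun w => s(u, w)) := by
    ext e
    induction e using Sym2.ind with
    | _ x y =>
      simp only [ES, Finset.mem_filter, Sym2.mem_iff, Finset.mem_image,
        SimpleGraph.mem_edgeFinset, SimpleGraph.mem_edgeSet]
      constructor
      · rintro ⟨⟨he, h⟩, (rfl | rfl)⟩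
        · exact ⟨y, ⟨h y (Or.inr rfl), he⟩, rfl⟩
        · exact ⟨x, ⟨h x (Or.inl rfl), he.symm⟩, Sym2.eq_swap⟩
      · rintro ⟨w, ⟨hwS, hadj⟩, hw⟩
        rw [Sym2.eq_iff] at hw
        rcases hw with ⟨rfl, rfl⟩ | ⟨rfl, rfl⟩
        · exact ⟨⟨hadj, by rintro z (rfl | rfl); exact hu; exact hwS⟩, Or.inl rfl⟩
        · exact ⟨⟨hadj.symm, by rintro z (rfl | rfl); exact hwS; exact hu⟩, Or.inr rfl⟩
  have h3 : (S.filter (G.Adj u)).card = ((ES G S).filter (fun e => u ∈ e)).card := by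
    rw [h2]
    rw [Finset.card_image_of_injOn]
    intro a ha b hb hab
    rw [Sym2.eq_iff] at hab
    rcases hab with ⟨_, h⟩ | ⟨h1', h2'⟩
    · exact h
    · exact absurd h2' (Finset.mem_filter.mp ha).2.ne'
  rw [h1, h3, add_comm]
  exact (Finset.card_filter_add_card_filter_not (p := fun e => u ∈ e)).symm

lemma ES_empty : ES G ∅ = ∅ := by
  rw [Finset.eq_empty_iff_forall_notMem]
  intro e
  induction e using Sym2.ind with
  | _ x y =>
    simp only [ES, Finset.mem_filter]
    rintro ⟨_, h⟩
    exact absurd (h x (Sym2.mem_mk_left x y)) (Finset.notMem_empty x)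

lemma key : ∀ (n : ℕ) (S : Finset V), S.card ≤ n →
    (∀ a b c d, a ∈ S → b ∈ S → c ∈ S → d ∈ S →
      G.Adj a b → G.Adj b c → G.Adj c d → a ≠ c → b ≠ d → a ≠ d → False) →
    (ES G S).card ≤ S.card := by
  intro n
  induction n with
  | zero =>
    intro S hS _
    rw [Nat.le_zero, Finset.card_eq_zero] at hS
    subst hS
    simp [ES_empty]
  | succ n ih =>
    intro S hS hP4
    rcases S.eq_empty_or_nonempty with rfl | hne
    · simp [ES_empty]
    by_cases hdeg : ∃ u ∈ S, (S.filter (G.Adj u)).card ≤ 1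
    · obtain ⟨u, hu, hdu⟩ := hdeg
      have hcard : (S.erase u).card = S.card - 1 := Finset.card_erase_of_mem hu
      have h1 : 1 ≤ S.card := Finset.card_pos.mpr ⟨u, hu⟩
      have hsub : S.erase u ⊆ S := Finset.erase_subset u S
      have := ih (S.erase u) (by omega)
        (fun a b c d ha hb hc hd => hP4 a b c d (hsub ha) (hsub hb) (hsub hc) (hsub hd))
      rw [ES_erase G S u hu]
      omega
    · push_neg at hdeg
      obtain ⟨u, hu⟩ := hne
      have hdu := hdeg u hu
      have h2 : 1 < (S.filter (G.Adj u)).card := hdu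
      obtain ⟨a, b, ha', hb', hab⟩ := Finset.one_lt_card_iff.mp h2
      rw [Finset.mem_filter] at ha' hb'
      obtain ⟨haS, hua⟩ := ha'
      obtain ⟨hbS, hub⟩ := hb'
      -- a and b are adjacent
      have hadjab : G.Adj a b := by
        have hns : ¬ (S.filter (G.Adj a) ⊆ {u}) := by
          intro h
          have := Finset.card_le_card h
          simp at this
          have := hdeg a haS
          omega
        obtain ⟨c, hc, hcu⟩ := Finset.not_subset.mp hns
        rw [Finset.mem_filter] at hc
        simp only [Finset.mem_singleton] at hcu
        by_cases hcb : c = b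
        · exact hcb ▸ hc.2
        · exact (hP4 c a u b hc.1 haS hu hbS hc.2.symm hua.symm hub hcu hab hcb).elim
      have hune : u ≠ a := hua.ne
      have hune' : u ≠ b := hub.ne
      -- neighborhoods
      have hfa : S.filter (G.Adj a) = {u, b} := by
        ext w
        simp only [Finset.mem_filter, Finset.mem_insert, Finset.mem_singleton]
        constructor
        · rintro ⟨hwS, haw⟩
          by_contra hw
          push_neg at hw
          exact hP4 w a u b hwS haS hu hbS haw.symm hua.symm hub hw.1 hab hw.2
        · rintro (rfl | rfl)
          · exact ⟨hu, hua.symm⟩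
          · exact ⟨hbS, hadjab⟩
      have hfb : S.filter (G.Adj b) = {u, a} := by
        ext w
        simp only [Finset.mem_filter, Finset.mem_insert, Finset.mem_singleton]
        constructor
        · rintro ⟨hwS, hbw⟩
          by_contra hw
          push_neg at hw
          exact hP4 w b u a hwS hbS hu haS hbw.symm hub.symm hua hw.1 hab.symm hw.2
        · rintro (rfl | rfl)
          · exact ⟨hu, hub.symm⟩
          · exact ⟨haS, hadjab.symm⟩
      have hfu : S.filter (G.Adj u) = {a, b} := by
        ext w
        simp only [Finset.mem_filter, Finset.mem_insert, Finset.mem_singleton]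
        constructor
        · rintro ⟨hwS, huw⟩
          by_contra hw
          push_neg at hw
          exact hP4 w u a b hwS hu haS hbS huw.symm hua hadjab hw.1 hune' hw.2
        · rintro (rfl | rfl)
          · exact ⟨haS, hua⟩
          · exact ⟨hbS, hub⟩
      -- erase u, a, b
      set S1 := S.erase u with hS1
      set S2 := S1.erase a with hS2
      set S3 := S2.erase b with hS3
      have haS1 : a ∈ S1 := Finset.mem_erase.mpr ⟨fun h => hune h.symm, haS⟩
      have hbS2 : b ∈ S2 := Finset.mem_erase.mpr ⟨fun h => hab h.symm,
        Finset.mem_erase.mpr ⟨fun h => hune' h.symm, hbS⟩⟩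
      have e1 : (ES G S).card = (ES G S1).card + 2 := by
        rw [ES_erase G S u hu, hfu]
        congr 1
        rw [Finset.card_insert_of_notMem (by simp [hab]), Finset.card_singleton]
      have efa : S1.filter (G.Adj a) = {b} := by
        rw [hS1, Finset.filter_erase, hfa]
        rw [Finset.erase_insert (by simp [hune'])]
      have e2 : (ES G S1).card = (ES G S2).card + 1 := by
        rw [ES_erase G S1 a haS1, efa, Finset.card_singleton]
      have efb : S2.filter (G.Adj b) = ∅ := by
        rw [hS2, hS1, Finset.filter_erase, Finset.filter_erase, hfb,
          Finset.erase_insert (by simp [hune]), Finset.erase_singleton]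
      have e3 : (ES G S2).card = (ES G S3).card := by
        rw [ES_erase G S2 b hbS2, efb]
        simp
        rfl
      have hc1 : S1.card = S.card - 1 := Finset.card_erase_of_mem hu
      have hc2 : S2.card = S1.card - 1 := Finset.card_erase_of_mem haS1
      have hc3 : S3.card = S2.card - 1 := Finset.card_erase_of_mem hbS2
      have hp1 : 1 ≤ S.card := Finset.card_pos.mpr ⟨u, hu⟩
      have hp2 : 1 ≤ S1.card := Finset.card_pos.mpr ⟨a, haS1⟩
      have hp3 : 1 ≤ S2.card := Finset.card_pos.mpr ⟨b, hbS2⟩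
      have hsub : S3 ⊆ S := by
        intro x hx
        exact Finset.erase_subset _ _ (Finset.erase_subset _ _ (Finset.erase_subset _ _ hx))
      have hih := ih S3 (by omega)
        (fun a b c d ha hb hc hd => hP4 a b c d (hsub ha) (hsub hb) (hsub hc) (hsub hd))
      omega

end Aux

theorem stmt7 {V : Type*} [Fintype V] [DecidableEq V] (G : SimpleGraph V)
    [DecidableRel G.Adj] (h5 : C5Free G) (v : V) :
    (G.edgeFinset.filter fun e => ∀ x ∈ e, x ∈ G.neighborFinset v).card
      ≤ G.degree v := by
  have hP4 : ∀ a b c d, a ∈ G.neighborFinset v → b ∈ G.neighborFinset v →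
      c ∈ G.neighborFinset v → d ∈ G.neighborFinset v →
      G.Adj a b → G.Adj b c → G.Adj c d → a ≠ c → b ≠ d → a ≠ d → False := by
    intro a b c d ha hb hc hd hab hbc hcd hac hbd had
    rw [SimpleGraph.mem_neighborFinset] at ha hb hc hd
    refine h5 ⟨![v, a, b, c, d], ?_, ?_⟩
    · have hva : v ≠ a := ha.ne
      have hvb : v ≠ b := hb.ne
      have hvc : v ≠ c := hc.ne
      have hvd : v ≠ d := hd.ne
      have h1 : a ≠ b := hab.ne
      have h2 : b ≠ c := hbc.ne
      have h3 : c ≠ d := hcd.ne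
      intro i j hij
      fin_cases i <;> fin_cases j <;> simp_all
    · intro i
      fin_cases i <;> simp_all [SimpleGraph.Adj.symm hd]
  exact key G _ (G.neighborFinset v) le_rfl hP4
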